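/- Let f : Finset α → ℝ be finite type of order ≤ n, i.e. for every pair of finite sets D′ ⊆ D with |D| − |D′| > n one has Σ_{D′ ⊆ H ⊆ D} (−1)^{|D| − |H|} f(H) = 0. Then for every finite set D, f(D) = Σ_{H ⊆ D, |H| ≤ n} C_f(H), where C_f(H) = Σ_{K ⊆ H} (−1)^{|H| − |K|} f(K). In particular f is determined by the values C_f(H) for |H| ≤ n. -/

import Mathlib

/-- The alternating-sum transform `C_f(H) = Σ_{K ⊆ H} (−1)^(|H| − |K|) f(K)`. -/
noncomputable def Cf {α : Type*} (f : Finset α → ℝ) (H : Finset α) : ℝ :=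
  ∑ K ∈ H.powerset, (-1 : ℝ) ^ (H.card - K.card) * f K

/-- `f` is finite type of order ≤ n: for all `D' ⊆ D` with `|D| − |D'| > n`,
the alternating sum `Σ_{D' ⊆ H ⊆ D} (−1)^(|D| − |H|) f(H)` vanishes. -/
def FiniteTypeLE {α : Type*} [DecidableEq α] (n : ℕ) (f : Finset α → ℝ) : Prop :=
  ∀ D' D : Finset α, D' ⊆ D → D.card - D'.card > n →
    ∑ H ∈ D.powerset.filter (fun H => D' ⊆ H),
      (-1 : ℝ) ^ (D.card - H.card) * f H = 0

open Finset in
lemma myAux_sum_powerset_neg_one_pow_card_real {α : Type*} [DecidableEq α] (x : Finset α) :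
    (∑ m ∈ x.powerset, (-1 : ℝ) ^ m.card) = if x = ∅ then 1 else 0 := by
  have h := Finset.sum_powerset_neg_one_pow_card (x := x)
  have := congrArg (Int.cast : ℤ → ℝ) h
  push_cast at this
  simpa using this

open Finset in
lemma myAux_inner_sum {α : Type*} [DecidableEq α] (K D : Finset α) (hKD : K ⊆ D) :
    ∑ H ∈ D.powerset.filter (fun H => K ⊆ H), (-1 : ℝ) ^ (H.card - K.card)
      = if K = D then 1 else 0 := by
  have himg : D.powerset.filter (fun H => K ⊆ H)
      = (D \ K).powerset.image (fun S => S ∪ K) := by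
    ext H
    simp only [mem_filter, mem_powerset, mem_image]
    constructor
    · rintro ⟨h1, h2⟩
      exact ⟨H \ K, by intro a ha; simp only [mem_sdiff] at ha ⊢; exact ⟨h1 ha.1, ha.2⟩,
        by rw [sdiff_union_of_subset h2]⟩
    · rintro ⟨S, hS, rfl⟩
      exact ⟨union_subset (hS.trans sdiff_subset) hKD, subset_union_right⟩
  rw [himg, Finset.sum_image]
  · have hc : ∀ S ∈ (D \ K).powerset, (-1 : ℝ) ^ ((S ∪ K).card - K.card) = (-1 : ℝ) ^ S.card := by
      intro S hS
      rw [mem_powerset] at hS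
      have hdisj : Disjoint S K := (Finset.sdiff_disjoint (t := D) (s := K)).mono_left hS
      rw [card_union_of_disjoint hdisj, Nat.add_sub_cancel]
    rw [Finset.sum_congr rfl hc, myAux_sum_powerset_neg_one_pow_card_real]
    congr 1
    simp only [sdiff_eq_empty_iff_subset, eq_iff_iff]
    exact ⟨fun h => subset_antisymm hKD h, fun h => h ▸ Subset.rfl⟩
  · intro S hS T hT hST
    rw [mem_coe, mem_powerset] at hS hT
    have dS : Disjoint S K := (Finset.sdiff_disjoint (t := D) (s := K)).mono_left hS
    have dT : Disjoint T K := (Finset.sdiff_disjoint (t := D) (s := K)).mono_left hT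
    calc S = (S ∪ K) \ K := (union_sdiff_cancel_right dS).symm
    _ = (T ∪ K) \ K := by rw [show S ∪ K = T ∪ K from hST]
    _ = T := union_sdiff_cancel_right dT

open Finset in
lemma myAux_inversion {α : Type*} [DecidableEq α] (f : Finset α → ℝ) (D : Finset α) :
    ∑ H ∈ D.powerset, Cf f H = f D := by
  unfold Cf
  rw [Finset.sum_sigma']
  rw [show (D.powerset.sigma fun H => H.powerset) =
    ((D.powerset.sigma fun K => D.powerset.filter (fun H => K ⊆ H)).map
      ⟨fun x => ⟨x.2, x.1⟩,
        Function.LeftInverse.injective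
          (g := fun (x : Σ _ : Finset α, Finset α) => (⟨x.2, x.1⟩ : Σ _ : Finset α, Finset α))
          (f := fun (x : Σ _ : Finset α, Finset α) => (⟨x.2, x.1⟩ : Σ _ : Finset α, Finset α))
          (by intro x; rfl)⟩) from ?_]
  · rw [Finset.sum_map]
    simp only [Function.Embedding.coeFn_mk]
    rw [Finset.sum_sigma]
    have : ∀ K ∈ D.powerset,
        (∑ H ∈ D.powerset.filter (fun H => K ⊆ H), (-1:ℝ)^(H.card - K.card) * f K)
          = (if K = D then 1 else 0) * f K := by
      intro K hK
      rw [← Finset.sum_mul, myAux_inner_sum K D (mem_powerset.1 hK)]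
    rw [Finset.sum_congr rfl this]
    simp [Finset.sum_ite_eq']
  · ext ⟨H, K⟩
    simp only [mem_sigma, mem_powerset, Finset.mem_map, Function.Embedding.coeFn_mk,
      Sigma.mk.inj_iff]
    constructor
    · rintro ⟨h1, h2⟩
      exact ⟨⟨K, H⟩, by simp [mem_sigma, mem_powerset, mem_filter, h2.trans h1, h1, h2]⟩
    · rintro ⟨⟨K', H'⟩, hm, h⟩
      simp only [mem_sigma, mem_powerset, mem_filter] at hm
      obtain ⟨rfl, h2⟩ : H' = H ∧ HEq K' K := ⟨by simpa using h.1, h.2⟩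
      cases h2
      exact ⟨hm.2.1, hm.2.2⟩


/-- A finite type function of order ≤ n is determined by `C_f` on sets of
size at most `n`: `f(D) = Σ_{H ⊆ D, |H| ≤ n} C_f(H)`. -/
theorem finiteType_inversion_truncated {α : Type*} [DecidableEq α] (n : ℕ) (f : Finset α → ℝ)
    (hf : FiniteTypeLE n f) (D : Finset α) :
    f D = ∑ H ∈ D.powerset.filter (fun H => H.card ≤ n), Cf f H := by
  have hzero : ∀ H : Finset α, n < H.card → Cf f H = 0 := by
    intro H hH
    have := hf ∅ H (Finset.empty_subset H) (by simpa using hH)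
    simpa [Finset.filter_true_of_mem, Cf] using this
  rw [← myAux_inversion f D, ← Finset.sum_filter_add_sum_filter_not D.powerset
    (fun H => H.card ≤ n) (Cf f)]
  have : ∑ H ∈ D.powerset.filter (fun H => ¬ H.card ≤ n), Cf f H = 0 :=
    Finset.sum_eq_zero fun H hH => hzero H (Nat.lt_of_not_le (Finset.mem_filter.1 hH).2)
  rw [this, add_zero]
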